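/- Let F be a Minkowski norm on a vector space with reversibility λ := sup_{v≠0} F(−v)/F(v) and uniformity constant Λ := sup over unit vectors X,Y,Z of g_X(Y,Y)/g_Z(Y,Y). Then λ ≤ √Λ. -/

import Mathlib

structure MinkowskiNorm (n : ℕ) where
  F : EuclideanSpace ℝ (Fin n) → ℝ
  nonneg : ∀ v, 0 ≤ F v
  eq_zero_iff : ∀ v, F v = 0 ↔ v = 0
  homog : ∀ (c : ℝ) (v : EuclideanSpace ℝ (Fin n)), 0 < c → F (c • v) = c * F v
  triangle : ∀ u v, F (u + v) ≤ F u + F v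
  triangle_strict : ∀ u v, u ≠ 0 → v ≠ 0 → F (u + v) = F u + F v →
    ∃ β : ℝ, 0 ≤ β ∧ u = β • v

/-- For a Minkowski norm with fundamental tensor `g` and uniformity constant
`Λ` (i.e. `g_X(Y,Y) ≤ Λ g_Z(Y,Y)` for all unit `X, Y, Z`), the reversibility
satisfies `F(−v) ≤ √Λ · F(v)` for all `v ≠ 0`; that is, `λ ≤ √Λ`. -/
theorem stmt2 {n : ℕ} (N : MinkowskiNorm n)
    (g : EuclideanSpace ℝ (Fin n) → EuclideanSpace ℝ (Fin n) → EuclideanSpace ℝ (Fin n) → ℝ)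
    (Λ : ℝ) (hΛ1 : 1 ≤ Λ)
    (hg_norm : ∀ y, y ≠ 0 → g y y y = (N.F y)^2)
    (hg_quad : ∀ y v (c : ℝ), g y (c • v) (c • v) = c^2 * g y v v)
    (hg_base : ∀ y v (c : ℝ), 0 < c → g (c • y) v v = g y v v)
    (hg_pos : ∀ y v, y ≠ 0 → 0 ≤ g y v v)
    (hΛ : ∀ X Y Z, N.F X = 1 → N.F Y = 1 → N.F Z = 1 → g X Y Y ≤ Λ * g Z Y Y) :
    ∀ v, v ≠ 0 → N.F (-v) ≤ Real.sqrt Λ * N.F v := by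
  intro v hv
  have hnv : (-v : EuclideanSpace ℝ (Fin n)) ≠ 0 := neg_ne_zero.mpr hv
  have ha : 0 < N.F v := lt_of_le_of_ne (N.nonneg v) (fun h => hv ((N.eq_zero_iff v).mp h.symm))
  have hb : 0 < N.F (-v) := lt_of_le_of_ne (N.nonneg _) (fun h => hnv ((N.eq_zero_iff _).mp h.symm))
  set a := N.F v
  set b := N.F (-v)
  set X := b⁻¹ • (-v) with hX
  set Z := a⁻¹ • v with hZ
  have hFX : N.F X = 1 := by
    rw [hX, N.homog _ _ (inv_pos.mpr hb)]
    field_simp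
    rfl
  have hFZ : N.F Z = 1 := by
    rw [hZ, N.homog _ _ (inv_pos.mpr ha)]
    field_simp
    rfl
  have key := hΛ X X Z hFX hFX hFZ
  have hgXXX : g X X X = 1 := by
    rw [hX]
    rw [hg_quad, hg_base _ _ _ (inv_pos.mpr hb), hg_norm _ hnv]
    field_simp
    rfl
  have hgZXX : g Z X X = b⁻¹^2 * a^2 := by
    rw [hX, hZ, hg_quad, hg_base _ _ _ (inv_pos.mpr ha)]
    have : (-v : EuclideanSpace ℝ (Fin n)) = (-1 : ℝ) • v := by simp
    rw [this, hg_quad, hg_norm _ hv]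
    ring
  rw [hgXXX, hgZXX] at key
  have hb2 : b^2 ≤ Λ * a^2 := by
    have hbne : b ≠ 0 := ne_of_gt hb
    have h2 := mul_le_mul_of_nonneg_right key (sq_nonneg b)
    rw [one_mul] at h2
    calc b^2 ≤ Λ * (b⁻¹^2 * a^2) * b^2 := h2
      _ = Λ * a^2 := by field_simp
  have : b ≤ Real.sqrt (Λ * a^2) := by
    rw [← Real.sqrt_sq hb.le]
    exact Real.sqrt_le_sqrt hb2
  calc b ≤ Real.sqrt (Λ * a^2) := this
    _ = Real.sqrt Λ * a := by
        rw [Real.sqrt_mul (by linarith), Real.sqrt_sq ha.le]
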